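/- Let n ≥ 1 and p ≥ 1 be integers, let β : {1, …, 2n} → {1, …, p} be a surjection (the block map, with blocks B_ℓ := β^{−1}(ℓ)), and let P = {{a_r, b_r} : r = 1, …, n} with a_r < b_r be a perfect matching of {1, …, 2n}. For each r with β(a_r) ≠ β(b_r), let K_r : ℤ → ℝ satisfy Σ_{z∈ℤ} |K_r(z)| < ∞. Define Λ_N := N^{−n} · Σ_{0 ≤ j₁ < j₂ < ⋯ < j_p ≤ N−1} ∏_{r : β(a_r) ≠ β(b_r)} K_r(j_{β(b_r)} − j_{β(a_r)}). If max_{ℓ=1,…,p} |B_ℓ| ≥ 3, then Λ_N → 0 as N → ∞. -/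

import Mathlib

open Filter
open scoped Classical

namespace Stmt9Aux

variable {n p : ℕ}

/-- Adjacency between blocks induced by inter-block pairs. -/
def Rel (β : Fin (2 * n) → Fin p) (a b : Fin n → Fin (2 * n)) (x y : Fin p) : Prop :=
  ∃ r : Fin n, β (a r) ≠ β (b r) ∧
    ((β (a r) = x ∧ β (b r) = y) ∨ (β (a r) = y ∧ β (b r) = x))

theorem rel_symm (β : Fin (2 * n) → Fin p) (a b : Fin n → Fin (2 * n)) :
    Symmetric (Rel β a b) := by
  rintro x y ⟨r, h, h'⟩
  exact ⟨r, h, h'.symm⟩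

/-- Reachability between blocks. -/
def Reach (β : Fin (2 * n) → Fin p) (a b : Fin n → Fin (2 * n)) : Fin p → Fin p → Prop :=
  Relation.ReflTransGen (Rel β a b)

theorem reach_symm (β : Fin (2 * n) → Fin p) (a b : Fin n → Fin (2 * n)) :
    Symmetric (Reach β a b) :=
  fun x y h => by
    haveI : Std.Symm (Rel β a b) := ⟨rel_symm β a b⟩
    exact (Relation.ReflTransGen.stdSymm (r := Rel β a b)).symm x y h

/-- Representative of the component of a block. -/
noncomputable def rep (β : Fin (2 * n) → Fin p) (a b : Fin n → Fin (2 * n)) (ℓ : Fin p) :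
    Fin p :=
  (Finset.univ.filter fun x => Reach β a b ℓ x).min'
    ⟨ℓ, by exact Finset.mem_filter.mpr ⟨Finset.mem_univ _, Relation.ReflTransGen.refl⟩⟩

theorem reach_rep (β : Fin (2 * n) → Fin p) (a b : Fin n → Fin (2 * n)) (ℓ : Fin p) :
    Reach β a b ℓ (rep β a b ℓ) := by
  have h := Finset.min'_mem (Finset.univ.filter fun x => Reach β a b ℓ x)
    ⟨ℓ, by exact Finset.mem_filter.mpr ⟨Finset.mem_univ _, Relation.ReflTransGen.refl⟩⟩
  exact (Finset.mem_filter.mp h).2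

theorem rep_eq_of_reach (β : Fin (2 * n) → Fin p) (a b : Fin n → Fin (2 * n)) {x y : Fin p}
    (h : Reach β a b x y) : rep β a b x = rep β a b y := by
  have hgen : ∀ (s t : Finset (Fin p)) (hs : s.Nonempty) (ht : t.Nonempty), s = t →
      s.min' hs = t.min' ht := by rintro s t hs ht rfl; rfl
  apply hgen
  ext z
  simp only [Finset.mem_filter, Finset.mem_univ, true_and]
  exact ⟨fun hz => (reach_symm β a b h).trans hz, fun hz => h.trans hz⟩

/-- BFS levels starting from the set of representatives. -/
noncomputable def Lvl (β : Fin (2 * n) → Fin p) (a b : Fin n → Fin (2 * n)) :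
    ℕ → Finset (Fin p)
  | 0 => Finset.univ.image (rep β a b)
  | (m + 1) =>
      Lvl β a b m ∪ Finset.univ.filter fun ℓ => ∃ r : Fin n, β (a r) ≠ β (b r) ∧
        ((β (a r) = ℓ ∧ β (b r) ∈ Lvl β a b m) ∨ (β (b r) = ℓ ∧ β (a r) ∈ Lvl β a b m))

theorem exists_lvl (β : Fin (2 * n) → Fin p) (a b : Fin n → Fin (2 * n)) (ℓ : Fin p) :
    ∃ m, ℓ ∈ Lvl β a b m := by
  have key : ∀ {x y : Fin p}, Reach β a b x y → ∀ m, x ∈ Lvl β a b m →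
      ∃ m', y ∈ Lvl β a b m' := by
    intro x y h
    induction h with
    | refl => exact fun m hm => ⟨m, hm⟩
    | tail hxy hrel ih =>
        intro m hm
        obtain ⟨m', hm'⟩ := ih m hm
        obtain ⟨r, hr, hcase⟩ := hrel
        refine ⟨m' + 1, ?_⟩
        rw [Lvl]
        refine Finset.mem_union_right _ ?_
        simp only [Finset.mem_filter, Finset.mem_univ, true_and]
        rcases hcase with ⟨h1, h2⟩ | ⟨h1, h2⟩
        · exact ⟨r, hr, Or.inr ⟨h2, by rw [h1]; exact hm'⟩⟩
        · exact ⟨r, hr, Or.inl ⟨h1, by rw [h2]; exact hm'⟩⟩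
  exact key (reach_symm β a b (reach_rep β a b ℓ)) 0
    (by rw [Lvl]; exact Finset.mem_image_of_mem _ (Finset.mem_univ ℓ))

/-- BFS depth of a block. -/
noncomputable def dep (β : Fin (2 * n) → Fin p) (a b : Fin n → Fin (2 * n)) (ℓ : Fin p) : ℕ :=
  Nat.find (exists_lvl β a b ℓ)

theorem dep_eq_zero {ℓ : Fin p} (β : Fin (2 * n) → Fin p) (a b : Fin n → Fin (2 * n))
    (h : dep β a b ℓ = 0) : ℓ ∈ Lvl β a b 0 := by
  have := Nat.find_spec (exists_lvl β a b ℓ)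
  rwa [show Nat.find (exists_lvl β a b ℓ) = dep β a b ℓ from rfl, h] at this

theorem exists_step (β : Fin (2 * n) → Fin p) (a b : Fin n → Fin (2 * n)) {ℓ : Fin p}
    (hℓ : ℓ ∉ Lvl β a b 0) :
    ∃ r : Fin n, β (a r) ≠ β (b r) ∧
      ((β (a r) = ℓ ∧ dep β a b (β (b r)) < dep β a b ℓ) ∨
       (β (b r) = ℓ ∧ dep β a b (β (a r)) < dep β a b ℓ)) := by
  have hspec : ℓ ∈ Lvl β a b (dep β a b ℓ) := Nat.find_spec (exists_lvl β a b ℓ)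
  have hne : dep β a b ℓ ≠ 0 := by
    intro h0
    exact hℓ (dep_eq_zero β a b h0)
  obtain ⟨m, hm⟩ := Nat.exists_eq_succ_of_ne_zero hne
  have hnot : ℓ ∉ Lvl β a b m := Nat.find_min (exists_lvl β a b ℓ) (show m < dep β a b ℓ by omega)
  have hmlt : ∀ ℓ' : Fin p, ℓ' ∈ Lvl β a b m → dep β a b ℓ' < dep β a b ℓ := by
    intro ℓ' hℓ'
    have h1 : dep β a b ℓ' ≤ m := Nat.find_min' _ hℓ'
    omega
  rw [hm, Lvl] at hspec
  rcases Finset.mem_union.mp hspec with h | h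
  · exact absurd h hnot
  · simp only [Finset.mem_filter, Finset.mem_univ, true_and] at h
    obtain ⟨r, hr, hc⟩ := h
    refine ⟨r, hr, ?_⟩
    rcases hc with ⟨h1, h2⟩ | ⟨h1, h2⟩
    · exact Or.inl ⟨h1, hmlt _ h2⟩
    · exact Or.inr ⟨h1, hmlt _ h2⟩

/-- The key combinatorial count: the number of components is at most `n - 1`. -/
theorem card_lvl0_lt (hn : 1 ≤ n)
    (β : Fin (2 * n) → Fin p) (hβ : Function.Surjective β)
    (a b : Fin n → Fin (2 * n))
    (hbij : Function.Bijective (Sum.elim a b))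
    (hblock : ∃ ℓ : Fin p, 3 ≤ (Finset.univ.filter fun x => β x = ℓ).card) :
    (Lvl β a b 0).card + 1 ≤ n := by
  set φ : Fin n → Fin p := fun r => rep β a b (β (a r)) with hφdef
  have hab' : ∀ r, rep β a b (β (a r)) = rep β a b (β (b r)) := by
    intro r
    by_cases h : β (a r) = β (b r)
    · rw [h]
    · exact rep_eq_of_reach β a b (Relation.ReflTransGen.single ⟨r, h, Or.inl ⟨rfl, rfl⟩⟩)
  have hpt : ∀ x : Fin (2 * n), ∃ r, φ r = rep β a b (β x) := by
    intro x
    obtain ⟨s, hs⟩ := hbij.surjective x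
    cases s with
    | inl r =>
        refine ⟨r, ?_⟩
        simp only [Sum.elim_inl] at hs
        show rep β a b (β (a r)) = rep β a b (β x)
        rw [hs]
    | inr r =>
        refine ⟨r, ?_⟩
        simp only [Sum.elim_inr] at hs
        show rep β a b (β (a r)) = rep β a b (β x)
        rw [hab' r, hs]
  have hsub : Lvl β a b 0 ⊆ Finset.univ.image φ := by
    intro y hy
    rw [Lvl] at hy
    obtain ⟨ℓ, _, rfl⟩ := Finset.mem_image.mp hy
    obtain ⟨x, rfl⟩ := hβ ℓ
    obtain ⟨r, hr⟩ := hpt x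
    exact Finset.mem_image.mpr ⟨r, Finset.mem_univ r, hr⟩
  obtain ⟨ℓs, h3⟩ := hblock
  obtain ⟨t, hts, htc⟩ := Finset.exists_subset_card_eq h3
  obtain ⟨x, y, z, hxy, hxz, hyz, rfl⟩ := Finset.card_eq_three.mp htc
  have hmem : ∀ w ∈ ({x, y, z} : Finset (Fin (2 * n))), β w = ℓs := fun w hw =>
    (Finset.mem_filter.mp (hts hw)).2
  have hpair : ∀ w : Fin (2 * n), ∃ r, w = a r ∨ w = b r := by
    intro w
    obtain ⟨s, hs⟩ := hbij.surjective w
    cases s with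
    | inl r => exact ⟨r, Or.inl (by simpa using hs.symm)⟩
    | inr r => exact ⟨r, Or.inr (by simpa using hs.symm)⟩
  have hφr : ∀ (w : Fin (2 * n)) (r : Fin n), (w = a r ∨ w = b r) → β w = ℓs →
      φ r = rep β a b ℓs := by
    rintro w r (rfl | rfl) hw
    · show rep β a b (β (a r)) = rep β a b ℓs
      rw [hw]
    · show rep β a b (β (a r)) = rep β a b ℓs
      rw [hab' r, hw]
  obtain ⟨rx, hx⟩ := hpair x
  obtain ⟨ry, hy⟩ := hpair y
  obtain ⟨rz, hz⟩ := hpair z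
  have hφx : φ rx = rep β a b ℓs := hφr x rx hx (hmem x (by simp))
  have hφy : φ ry = rep β a b ℓs := hφr y ry hy (hmem y (by simp))
  have hφz : φ rz = rep β a b ℓs := hφr z rz hz (hmem z (by simp))
  have hpairmem : ∀ (w : Fin (2 * n)) (r : Fin n), (w = a r ∨ w = b r) →
      w ∈ ({a r, b r} : Finset (Fin (2 * n))) := by
    rintro w r (rfl | rfl) <;> simp
  obtain ⟨r₁, r₂, hr12, hφ1, hφ2⟩ :
      ∃ r₁ r₂ : Fin n, r₁ ≠ r₂ ∧ φ r₁ = rep β a b ℓs ∧ φ r₂ = rep β a b ℓs := by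
    by_cases h12 : rx = ry
    · by_cases h23 : ry = rz
      · exfalso
        have hsub3 : ({x, y, z} : Finset (Fin (2 * n))) ⊆ {a rx, b rx} := by
          intro w hw
          simp only [Finset.mem_insert, Finset.mem_singleton] at hw
          rcases hw with rfl | rfl | rfl
          · exact hpairmem w rx hx
          · exact hpairmem w rx (h12 ▸ hy)
          · exact hpairmem w rx ((h12.trans h23) ▸ hz)
        have h1 := Finset.card_le_card hsub3
        have h2 : ({a rx, b rx} : Finset (Fin (2 * n))).card ≤ 2 :=
          Finset.card_insert_le _ _ |>.trans (by simp)
        omega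
      · exact ⟨ry, rz, h23, hφy, hφz⟩
    · exact ⟨rx, ry, h12, hφx, hφy⟩
  have hcard : n = ∑ w ∈ Finset.univ.image φ, (Finset.univ.filter fun r => φ r = w).card := by
    have := Finset.card_eq_sum_card_image φ (Finset.univ : Finset (Fin n))
    simpa using this
  have hmemi : rep β a b ℓs ∈ Finset.univ.image φ :=
    Finset.mem_image.mpr ⟨r₁, Finset.mem_univ _, hφ1⟩
  have h2le : 2 ≤ (Finset.univ.filter fun r => φ r = rep β a b ℓs).card := by
    have hsub2 : ({r₁, r₂} : Finset (Fin n)) ⊆ Finset.univ.filter fun r => φ r = rep β a b ℓs := by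
      intro w hw
      simp only [Finset.mem_insert, Finset.mem_singleton] at hw
      rcases hw with rfl | rfl
      · exact Finset.mem_filter.mpr ⟨Finset.mem_univ _, hφ1⟩
      · exact Finset.mem_filter.mpr ⟨Finset.mem_univ _, hφ2⟩
    calc 2 = ({r₁, r₂} : Finset (Fin n)).card := (Finset.card_pair hr12).symm
    _ ≤ _ := Finset.card_le_card hsub2
  have hsplit : (Finset.univ.filter fun r => φ r = rep β a b ℓs).card
      + ∑ w ∈ (Finset.univ.image φ).erase (rep β a b ℓs),
          (Finset.univ.filter fun r => φ r = w).card
      = ∑ w ∈ Finset.univ.image φ, (Finset.univ.filter fun r => φ r = w).card :=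
    Finset.add_sum_erase _ (fun w => (Finset.univ.filter fun r => φ r = w).card) hmemi
  have hone : ((Finset.univ.image φ).erase (rep β a b ℓs)).card
      ≤ ∑ w ∈ (Finset.univ.image φ).erase (rep β a b ℓs),
          (Finset.univ.filter fun r => φ r = w).card := by
    rw [Finset.card_eq_sum_ones]
    apply Finset.sum_le_sum
    intro w hw
    obtain ⟨r, _, hr⟩ := Finset.mem_image.mp (Finset.mem_of_mem_erase hw)
    exact Finset.card_pos.mpr ⟨r, Finset.mem_filter.mpr ⟨Finset.mem_univ _, hr⟩⟩
  have herase : ((Finset.univ.image φ).erase (rep β a b ℓs)).card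
      = (Finset.univ.image φ).card - 1 := Finset.card_erase_of_mem hmemi
  have himgpos : 1 ≤ (Finset.univ.image φ).card := Finset.card_pos.mpr ⟨_, hmemi⟩
  have hLle : (Lvl β a b 0).card ≤ (Finset.univ.image φ).card := Finset.card_le_card hsub
  omega

end Stmt9Aux

set_option maxHeartbeats 1000000 in
/-- higher-order diagonals vanish, key step of Proposition 4.17.
Given a surjective block map `β : {1..2n} → {1..p}`, a perfect matching
`P = {{a_r, b_r}}` of `{1..2n}` (encoded by the bijectivity of `Sum.elim a b`), and
`ℓ¹` kernels `K_r` for the inter-block pairs, if some block has size at least 3 then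
`Λ_N = N^{−n} Σ_{0 ≤ j₁ < ⋯ < j_p ≤ N−1} ∏_{r : β(a_r) ≠ β(b_r)} K_r(j_{β(b_r)} − j_{β(a_r)})`
tends to `0` as `N → ∞`. -/
theorem stmt9 (n p : ℕ) (hn : 1 ≤ n) (hp : 1 ≤ p)
    (β : Fin (2 * n) → Fin p) (hβ : Function.Surjective β)
    (a b : Fin n → Fin (2 * n)) (hab : ∀ r, a r < b r)
    (hbij : Function.Bijective (Sum.elim a b))
    (K : Fin n → ℤ → ℝ)
    (hK : ∀ r, β (a r) ≠ β (b r) → Summable fun z : ℤ => |K r z|)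
    (hblock : ∃ ℓ : Fin p, 3 ≤ (Finset.univ.filter fun x => β x = ℓ).card) :
    Tendsto (fun N : ℕ =>
      (1 / (N : ℝ) ^ n) *
        ∑ j ∈ (Fintype.piFinset fun _ : Fin p => Finset.range N).filter
            (fun j => StrictMono j),
          ∏ r ∈ Finset.univ.filter (fun r => β (a r) ≠ β (b r)),
            K r ((j (β (b r)) : ℤ) - (j (β (a r)) : ℤ)))
      atTop (nhds 0) := by
  classical
  have hn0 : 0 < n := hn
  haveI : Nonempty (Fin n) := ⟨⟨0, hn0⟩⟩
  set S : Finset (Fin p) := (Stmt9Aux.Lvl β a b 0)ᶜ with hSdef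
  have hstep : ∀ ℓ ∈ S, ∃ r : Fin n, β (a r) ≠ β (b r) ∧
      ((β (a r) = ℓ ∧ Stmt9Aux.dep β a b (β (b r)) < Stmt9Aux.dep β a b ℓ) ∨
       (β (b r) = ℓ ∧ Stmt9Aux.dep β a b (β (a r)) < Stmt9Aux.dep β a b ℓ)) := by
    intro ℓ hℓ
    exact Stmt9Aux.exists_step β a b (Finset.mem_compl.mp hℓ)
  choose! ρ hρ1 hρ2 using hstep
  have hρinj : ∀ ℓ₁ ∈ S, ∀ ℓ₂ ∈ S, ρ ℓ₁ = ρ ℓ₂ → ℓ₁ = ℓ₂ := by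
    intro ℓ₁ h₁ ℓ₂ h₂ hEq
    rcases hρ2 ℓ₁ h₁ with ⟨e1, d1⟩ | ⟨e1, d1⟩ <;> rcases hρ2 ℓ₂ h₂ with ⟨e2, d2⟩ | ⟨e2, d2⟩
    · rw [hEq] at e1; exact e1.symm.trans e2
    · rw [hEq] at e1 d1
      rw [e1] at d2; rw [e2] at d1
      omega
    · rw [hEq] at e1 d1
      rw [e1] at d2; rw [e2] at d1
      omega
    · rw [hEq] at e1; exact e1.symm.trans e2
  set M : Fin n → ℝ := fun r => ∑' z : ℤ, |K r z| with hMdef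
  have hM0 : ∀ r, 0 ≤ M r := fun r => tsum_nonneg fun z => abs_nonneg _
  set R : Finset (Fin n) := Finset.univ.filter fun r => β (a r) ≠ β (b r) with hRdef
  have hmemR : ∀ r ∈ R, β (a r) ≠ β (b r) := fun r hr => (Finset.mem_filter.mp hr).2
  set C : ℝ := ∏ r ∈ R, M r with hCdef
  have hC0 : 0 ≤ C := Finset.prod_nonneg fun r _ => hM0 r
  set c : ℕ := (Stmt9Aux.Lvl β a b 0).card with hcdef
  have hcount : c + 1 ≤ n := Stmt9Aux.card_lvl0_lt hn β hβ a b hbij hblock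
  have himgρ : S.image ρ ⊆ R := by
    intro r hr
    obtain ⟨ℓ, hℓ, rfl⟩ := Finset.mem_image.mp hr
    exact Finset.mem_filter.mpr ⟨Finset.mem_univ _, hρ1 ℓ hℓ⟩
  apply squeeze_zero_norm' ?_ (tendsto_const_div_atTop_nhds_zero_nat C)
  filter_upwards [eventually_ge_atTop 1] with N hN
  have hNR : (1 : ℝ) ≤ (N : ℝ) := by exact_mod_cast hN
  have hN0 : (0 : ℝ) < (N : ℝ) := lt_of_lt_of_le zero_lt_one hNR
  set A : Finset (Fin p → ℕ) := Fintype.piFinset fun _ : Fin p => Finset.range N with hAdef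
  set Φ : (Fin p → ℕ) → (Fin p → ℤ) := fun j ℓ =>
    if ℓ ∈ S then ((j (β (b (ρ ℓ))) : ℤ) - (j (β (a (ρ ℓ))) : ℤ)) else (j ℓ : ℤ) with hΦdef
  set B : Finset (Fin p → ℤ) := Fintype.piFinset fun ℓ : Fin p =>
    if ℓ ∈ S then Finset.Icc (-(N : ℤ)) (N : ℤ)
    else (Finset.range N).image ((↑) : ℕ → ℤ) with hBdef
  -- Step 1 : bound by the sum of absolute values over the full box
  have step1 : ‖(1 / (N : ℝ) ^ n) *
        ∑ j ∈ A.filter (fun j => StrictMono j), ∏ r ∈ R,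
          K r ((j (β (b r)) : ℤ) - (j (β (a r)) : ℤ))‖
      ≤ (1 / (N : ℝ) ^ n) * ∑ j ∈ A, ∏ r ∈ R,
          |K r ((j (β (b r)) : ℤ) - (j (β (a r)) : ℤ))| := by
    rw [Real.norm_eq_abs, abs_mul, abs_of_nonneg (by positivity : (0:ℝ) ≤ 1 / (N : ℝ) ^ n)]
    apply mul_le_mul_of_nonneg_left _ (by positivity)
    calc |∑ j ∈ A.filter (fun j => StrictMono j), ∏ r ∈ R,
            K r ((j (β (b r)) : ℤ) - (j (β (a r)) : ℤ))|
        ≤ ∑ j ∈ A.filter (fun j => StrictMono j), |∏ r ∈ R,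
            K r ((j (β (b r)) : ℤ) - (j (β (a r)) : ℤ))| := Finset.abs_sum_le_sum_abs _ _
      _ = ∑ j ∈ A.filter (fun j => StrictMono j), ∏ r ∈ R,
            |K r ((j (β (b r)) : ℤ) - (j (β (a r)) : ℤ))| := by
            apply Finset.sum_congr rfl; intro j _; exact Finset.abs_prod _ _
      _ ≤ ∑ j ∈ A, ∏ r ∈ R, |K r ((j (β (b r)) : ℤ) - (j (β (a r)) : ℤ))| :=
            Finset.sum_le_sum_of_subset_of_nonneg (Finset.filter_subset _ _)
              (fun j _ _ => Finset.prod_nonneg fun r _ => abs_nonneg _)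
  -- Step 2 : pointwise bound of the product, keeping only the selected pairs
  have step2 : ∀ j ∈ A, ∏ r ∈ R, |K r ((j (β (b r)) : ℤ) - (j (β (a r)) : ℤ))| ≤
      (∏ ℓ ∈ S, |K (ρ ℓ) ((j (β (b (ρ ℓ))) : ℤ) - (j (β (a (ρ ℓ))) : ℤ))|)
        * ∏ r ∈ R \ S.image ρ, M r := by
    intro j _
    calc ∏ r ∈ R, |K r ((j (β (b r)) : ℤ) - (j (β (a r)) : ℤ))|
        = (∏ r ∈ R \ S.image ρ, |K r ((j (β (b r)) : ℤ) - (j (β (a r)) : ℤ))|)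
            * ∏ r ∈ S.image ρ, |K r ((j (β (b r)) : ℤ) - (j (β (a r)) : ℤ))| :=
          (Finset.prod_sdiff himgρ).symm
      _ = (∏ r ∈ R \ S.image ρ, |K r ((j (β (b r)) : ℤ) - (j (β (a r)) : ℤ))|)
            * ∏ ℓ ∈ S, |K (ρ ℓ) ((j (β (b (ρ ℓ))) : ℤ) - (j (β (a (ρ ℓ))) : ℤ))| := by
          rw [Finset.prod_image hρinj]
      _ ≤ (∏ r ∈ R \ S.image ρ, M r)
            * ∏ ℓ ∈ S, |K (ρ ℓ) ((j (β (b (ρ ℓ))) : ℤ) - (j (β (a (ρ ℓ))) : ℤ))| := by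
          apply mul_le_mul_of_nonneg_right _ (Finset.prod_nonneg fun ℓ _ => abs_nonneg _)
          apply Finset.prod_le_prod (fun r _ => abs_nonneg _)
          intro r hr
          exact Summable.le_tsum (hK r (hmemR r (Finset.mem_sdiff.mp hr).1)) _
            (fun z _ => abs_nonneg _)
      _ = _ := mul_comm _ _
  -- Step 3 : injectivity of the change of variables
  have hΦinj : ∀ j₁ j₂ : Fin p → ℕ, Φ j₁ = Φ j₂ → j₁ = j₂ := by
    intro j₁ j₂ heq
    have key : ∀ (m : ℕ) (ℓ : Fin p), Stmt9Aux.dep β a b ℓ ≤ m → j₁ ℓ = j₂ ℓ := by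
      intro m
      induction m with
      | zero =>
          intro ℓ hℓ
          have hL : ℓ ∈ Stmt9Aux.Lvl β a b 0 := Stmt9Aux.dep_eq_zero β a b (Nat.le_zero.mp hℓ)
          have hnS : ℓ ∉ S := by rw [hSdef]; simp [hL]
          have hcf := congrFun heq ℓ
          simp only [hΦdef, if_neg hnS] at hcf
          exact_mod_cast hcf
      | succ m ih =>
          intro ℓ hℓ
          by_cases hS : ℓ ∈ S
          · have hcf := congrFun heq ℓ
            simp only [hΦdef, if_pos hS] at hcf
            rcases hρ2 ℓ hS with ⟨e1, d1⟩ | ⟨e1, d1⟩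
            · have hb' : j₁ (β (b (ρ ℓ))) = j₂ (β (b (ρ ℓ))) := ih _ (by omega)
              rw [e1, hb'] at hcf
              omega
            · have ha' : j₁ (β (a (ρ ℓ))) = j₂ (β (a (ρ ℓ))) := ih _ (by omega)
              rw [e1, ha'] at hcf
              omega
          · have hcf := congrFun heq ℓ
            simp only [hΦdef, if_neg hS] at hcf
            exact_mod_cast hcf
    funext ℓ
    exact key (Stmt9Aux.dep β a b ℓ) ℓ le_rfl
  have hΦmem : ∀ j ∈ A, Φ j ∈ B := by
    intro j hj
    rw [hAdef, Fintype.mem_piFinset] at hj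
    rw [hBdef, Fintype.mem_piFinset]
    intro ℓ
    have hjlt : ∀ x : Fin p, j x < N := fun x => Finset.mem_range.mp (hj x)
    by_cases hS : ℓ ∈ S
    · simp only [hΦdef, if_pos hS, Finset.mem_Icc]
      have h1 := hjlt (β (b (ρ ℓ)))
      have h2 := hjlt (β (a (ρ ℓ)))
      omega
    · simp only [hΦdef, if_neg hS]
      exact Finset.mem_image.mpr ⟨j ℓ, Finset.mem_range.mpr (hjlt ℓ), rfl⟩
  -- Step 4 : sum of the selected product over the box
  have step4 : ∑ j ∈ A, ∏ ℓ ∈ S, |K (ρ ℓ) ((j (β (b (ρ ℓ))) : ℤ) - (j (β (a (ρ ℓ))) : ℤ))| ≤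
      (∏ ℓ ∈ S, M (ρ ℓ)) * (N : ℝ) ^ c := by
    calc ∑ j ∈ A, ∏ ℓ ∈ S, |K (ρ ℓ) ((j (β (b (ρ ℓ))) : ℤ) - (j (β (a (ρ ℓ))) : ℤ))|
        = ∑ j ∈ A, ∏ ℓ ∈ S, |K (ρ ℓ) (Φ j ℓ)| := by
          apply Finset.sum_congr rfl; intro j _
          apply Finset.prod_congr rfl; intro ℓ hℓ
          simp only [hΦdef]
          rw [if_pos hℓ]
      _ = ∑ g ∈ A.image Φ, ∏ ℓ ∈ S, |K (ρ ℓ) (g ℓ)| := by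
          rw [Finset.sum_image (fun x _ y _ h => hΦinj x y h)]
      _ ≤ ∑ g ∈ B, ∏ ℓ ∈ S, |K (ρ ℓ) (g ℓ)| :=
          Finset.sum_le_sum_of_subset_of_nonneg (Finset.image_subset_iff.mpr hΦmem)
            (fun g _ _ => Finset.prod_nonneg fun ℓ _ => abs_nonneg _)
      _ = ∑ g ∈ B, ∏ ℓ : Fin p, (if ℓ ∈ S then |K (ρ ℓ) (g ℓ)| else 1) := by
          apply Finset.sum_congr rfl; intro g _
          rw [Finset.prod_ite_mem Finset.univ S fun ℓ => |K (ρ ℓ) (g ℓ)|, Finset.univ_inter]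
      _ = ∏ ℓ : Fin p, ∑ x ∈ (if ℓ ∈ S then Finset.Icc (-(N : ℤ)) (N : ℤ)
              else (Finset.range N).image ((↑) : ℕ → ℤ)),
            (if ℓ ∈ S then |K (ρ ℓ) x| else 1) := by
          rw [hBdef, Finset.prod_univ_sum]
      _ ≤ ∏ ℓ : Fin p, (if ℓ ∈ S then M (ρ ℓ) else (N : ℝ)) := by
          apply Finset.prod_le_prod
          · intro ℓ _
            apply Finset.sum_nonneg
            intro x _
            by_cases hS : ℓ ∈ S <;> simp [hS, abs_nonneg]
          · intro ℓ _
            by_cases hS : ℓ ∈ S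
            · simp only [if_pos hS]
              exact Summable.sum_le_tsum _ (fun z _ => abs_nonneg _) (hK (ρ ℓ) (hρ1 ℓ hS))
            · simp only [if_neg hS]
              rw [Finset.sum_const, Finset.card_image_of_injective _ Nat.cast_injective,
                Finset.card_range]
              simp
      _ = (∏ ℓ ∈ S, M (ρ ℓ)) * (N : ℝ) ^ c := by
          rw [← Finset.prod_mul_prod_compl S]
          congr 1
          · exact Finset.prod_congr rfl fun ℓ hℓ => if_pos hℓ
          · rw [Finset.prod_congr rfl fun ℓ hℓ => if_neg (Finset.mem_compl.mp hℓ),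
              Finset.prod_const]
            congr 1
            rw [hcdef, hSdef, compl_compl]
  -- Assemble
  have hD0 : 0 ≤ ∏ r ∈ R \ S.image ρ, M r := Finset.prod_nonneg fun r _ => hM0 r
  have hfinal : ∑ j ∈ A, ∏ r ∈ R, |K r ((j (β (b r)) : ℤ) - (j (β (a r)) : ℤ))|
      ≤ C * (N : ℝ) ^ c := by
    calc ∑ j ∈ A, ∏ r ∈ R, |K r ((j (β (b r)) : ℤ) - (j (β (a r)) : ℤ))|
        ≤ ∑ j ∈ A, (∏ ℓ ∈ S, |K (ρ ℓ) ((j (β (b (ρ ℓ))) : ℤ) - (j (β (a (ρ ℓ))) : ℤ))|)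
            * ∏ r ∈ R \ S.image ρ, M r := Finset.sum_le_sum step2
      _ = (∑ j ∈ A, ∏ ℓ ∈ S, |K (ρ ℓ) ((j (β (b (ρ ℓ))) : ℤ) - (j (β (a (ρ ℓ))) : ℤ))|)
            * ∏ r ∈ R \ S.image ρ, M r := by rw [Finset.sum_mul]
      _ ≤ ((∏ ℓ ∈ S, M (ρ ℓ)) * (N : ℝ) ^ c) * ∏ r ∈ R \ S.image ρ, M r :=
          mul_le_mul_of_nonneg_right step4 hD0
      _ = ((∏ r ∈ R \ S.image ρ, M r) * ∏ ℓ ∈ S, M (ρ ℓ)) * (N : ℝ) ^ c := by ring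
      _ = C * (N : ℝ) ^ c := by
          have himgprod : ∏ ℓ ∈ S, M (ρ ℓ) = ∏ r ∈ S.image ρ, M r :=
            (Finset.prod_image hρinj).symm
          rw [himgprod, Finset.prod_sdiff himgρ, ← hCdef]
  calc ‖(1 / (N : ℝ) ^ n) *
        ∑ j ∈ A.filter (fun j => StrictMono j), ∏ r ∈ R,
          K r ((j (β (b r)) : ℤ) - (j (β (a r)) : ℤ))‖
      ≤ (1 / (N : ℝ) ^ n) * ∑ j ∈ A, ∏ r ∈ R,
          |K r ((j (β (b r)) : ℤ) - (j (β (a r)) : ℤ))| := step1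
    _ ≤ (1 / (N : ℝ) ^ n) * (C * (N : ℝ) ^ c) :=
        mul_le_mul_of_nonneg_left hfinal (by positivity)
    _ ≤ C / N := by
        rw [one_div_mul_eq_div, div_le_div_iff₀ (by positivity) hN0]
        have hpow : (N : ℝ) ^ (c + 1) ≤ (N : ℝ) ^ n := pow_le_pow_right₀ hNR (by omega)
        calc C * (N : ℝ) ^ c * (N : ℝ) = C * (N : ℝ) ^ (c + 1) := by ring
          _ ≤ C * (N : ℝ) ^ n := mul_le_mul_of_nonneg_left hpow hC0
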